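/- arXiv:2202.13436 — 2 statements merged into one kernel-verified Lean document; each statement's English description precedes it below -/
import Mathlib

section
/- Let Ξ be a finite set of scenarios with probability weights q : Ξ → ℝ satisfying q(ξ) ≥ 0 and ∑_{ξ∈Ξ} q(ξ) = 1. Let E be a real inner product space, and for each ξ ∈ Ξ let f_ξ : E → ℝ be Lipschitz with a common constant L ≥ 0. Let κ ∈ [0,1] and let x^π, p : Ξ → E. Define x⁺(ξ) = κ • x^π(ξ) + (1 − κ) • p(ξ) for each ξ. Then ∑_{ξ} q(ξ) f_ξ(x⁺(ξ)) ≤ ∑_{ξ} q(ξ) f_ξ(x^π(ξ)) + L·(1 − κ)·√(∑_{ξ} q(ξ)·‖p(ξ) − x^π(ξ)‖²). -/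
open scoped BigOperators

/-- Proposition 1: expected objective of the blended NP iterate is bounded by the
expected objective at the expert policy plus `L (1-κ)` times the weighted L²
distance between the projected solution `p` and the expert `xπ`. -/
theorem expected_blended_iterate_bound
    {Ξ : Type*} [Fintype Ξ] (q : Ξ → ℝ) (hq : ∀ ξ, 0 ≤ q ξ)
    (hqsum : ∑ ξ : Ξ, q ξ = 1)
    {E : Type*} [NormedAddCommGroup E] [InnerProductSpace ℝ E]
    (f : Ξ → E → ℝ) (L : ℝ) (hL : 0 ≤ L)
    (hf : ∀ ξ, ∀ x x' : E, |f ξ x - f ξ x'| ≤ L * ‖x - x'‖)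
    (κ : ℝ) (hκ0 : 0 ≤ κ) (hκ1 : κ ≤ 1) (xπ p : Ξ → E) :
    ∑ ξ : Ξ, q ξ * f ξ (κ • xπ ξ + (1 - κ) • p ξ) ≤
      ∑ ξ : Ξ, q ξ * f ξ (xπ ξ) +
        L * (1 - κ) * Real.sqrt (∑ ξ : Ξ, q ξ * ‖p ξ - xπ ξ‖ ^ 2) := by
  have key : ∀ ξ, f ξ (κ • xπ ξ + (1 - κ) • p ξ) ≤
      f ξ (xπ ξ) + L * (1 - κ) * ‖p ξ - xπ ξ‖ := by
    intro ξ
    have h := (abs_le.mp (hf ξ (κ • xπ ξ + (1 - κ) • p ξ) (xπ ξ))).2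
    have hdiff : κ • xπ ξ + (1 - κ) • p ξ - xπ ξ = (1 - κ) • (p ξ - xπ ξ) := by
      simp [smul_sub, sub_smul, one_smul]; abel
    rw [hdiff, norm_smul, Real.norm_eq_abs,
      abs_of_nonneg (by linarith : (0:ℝ) ≤ 1 - κ), ← mul_assoc] at h
    linarith
  calc ∑ ξ : Ξ, q ξ * f ξ (κ • xπ ξ + (1 - κ) • p ξ)
      ≤ ∑ ξ : Ξ, q ξ * (f ξ (xπ ξ) + L * (1 - κ) * ‖p ξ - xπ ξ‖) :=
        Finset.sum_le_sum fun ξ _ => mul_le_mul_of_nonneg_left (key ξ) (hq ξ)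
    _ = ∑ ξ : Ξ, q ξ * f ξ (xπ ξ) + L * (1 - κ) * ∑ ξ : Ξ, q ξ * ‖p ξ - xπ ξ‖ := by
        rw [Finset.mul_sum, ← Finset.sum_add_distrib]
        exact Finset.sum_congr rfl fun ξ _ => by ring
    _ ≤ _ := by
        have hnn : 0 ≤ L * (1 - κ) := mul_nonneg hL (by linarith)
        refine add_le_add_right (mul_le_mul_of_nonneg_left ?_ hnn) _
        have hcs : ∑ ξ : Ξ, Real.sqrt (q ξ) * Real.sqrt (q ξ * ‖p ξ - xπ ξ‖ ^ 2) ≤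
            Real.sqrt (∑ ξ : Ξ, q ξ) * Real.sqrt (∑ ξ : Ξ, q ξ * ‖p ξ - xπ ξ‖ ^ 2) :=
          Real.sum_sqrt_mul_sqrt_le _ hq (fun ξ => mul_nonneg (hq ξ) (sq_nonneg _))
        have heq : ∀ ξ, q ξ * ‖p ξ - xπ ξ‖ =
            Real.sqrt (q ξ) * Real.sqrt (q ξ * ‖p ξ - xπ ξ‖ ^ 2) := by
          intro ξ
          rw [Real.sqrt_mul (hq ξ), Real.sqrt_sq (norm_nonneg _), ← mul_assoc,
            Real.mul_self_sqrt (hq ξ)]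
        calc ∑ ξ : Ξ, q ξ * ‖p ξ - xπ ξ‖
            = ∑ ξ : Ξ, Real.sqrt (q ξ) * Real.sqrt (q ξ * ‖p ξ - xπ ξ‖ ^ 2) := by
              simp_rw [heq]
          _ ≤ _ := by simpa [hqsum] using hcs
end

section
/- Let H be a real inner product space and let A : H → Set H be a monotone operator, i.e. for all x, y ∈ H and all u ∈ A(x), v ∈ A(y), one has ⟪u − v, x − y⟫ ≥ 0. Let ν > 0 and let x⁰, x¹, x² ∈ H satisfy the consecutive proximal-point relations ν • (x⁰ − x¹) ∈ A(x¹) and ν • (x¹ − x²) ∈ A(x²). Then ‖x² − x¹‖ ≤ ‖x¹ − x⁰‖; i.e., the sizes of successive proximal-point steps are nonincreasing. -/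
open scoped RealInnerProductSpace

/-- Successive proximal-point step sizes are nonincreasing for a monotone
operator: if `ν • (x0 - x1) ∈ A x1` and `ν • (x1 - x2) ∈ A x2` with `ν > 0`,
then `‖x2 - x1‖ ≤ ‖x1 - x0‖`. -/
theorem proximal_step_sizes_nonincreasing
    {H : Type*} [NormedAddCommGroup H] [InnerProductSpace ℝ H]
    (A : H → Set H)
    (hA : ∀ x y : H, ∀ u ∈ A x, ∀ v ∈ A y, 0 ≤ ⟪u - v, x - y⟫)
    (ν : ℝ) (hν : 0 < ν) (x0 x1 x2 : H)
    (h1 : ν • (x0 - x1) ∈ A x1) (h2 : ν • (x1 - x2) ∈ A x2) :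
    ‖x2 - x1‖ ≤ ‖x1 - x0‖ := by
  have key := hA x1 x2 _ h1 _ h2
  set a := x1 - x0
  set b := x2 - x1
  have hrw : ν • (x0 - x1) - ν • (x1 - x2) = ν • (b - a) := by
    simp [a, b, smul_sub]; abel
  have h3 : (0:ℝ) ≤ ν * ⟪a - b, b⟫ := by
    have heq : ⟪ν • (b - a), x1 - x2⟫ = ν * ⟪a - b, b⟫ := by
      have hx : x1 - x2 = -b := by simp [b]
      rw [real_inner_smul_left, hx, inner_neg_right, ← inner_neg_left, neg_sub]
    rwa [hrw, heq] at key
  have h4 : (0:ℝ) ≤ ⟪a - b, b⟫ := nonneg_of_mul_nonneg_right h3 hν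
  have h5 : ‖b‖ ^ 2 ≤ ⟪a, b⟫ := by
    rw [inner_sub_left, real_inner_self_eq_norm_sq] at h4
    linarith
  have h6 : ⟪a, b⟫ ≤ ‖a‖ * ‖b‖ := real_inner_le_norm a b
  nlinarith [norm_nonneg a, norm_nonneg b]
end
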